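/- For t ∈ ℝ let v_t : {(x,y) : x > 0} × ℝ → ℝ³ be v_t(x,y) = ( −(coth(√3 x) + (2/√3)cos t)·e^{2(−x cos t + y sin t)}, −(coth(√3 x) − (cos t − √3 sin t)/√3)·e^{(cos t − √3 sin t)x + (−sin t − √3 cos t)y}, −(coth(√3 x) − (cos t + √3 sin t)/√3)·e^{(cos t + √3 sin t)x + (−sin t + √3 cos t)y} ). Then for every t and all x > 0, y ∈ ℝ: det[∂ₓv_t, ∂ᵧv_t, ∂ₓᵧv_t] = 0 and det[∂ₓv_t, ∂ᵧv_t, ∂ₓₓv_t] = det[∂ₓv_t, ∂ᵧv_t, ∂ᵧᵧv_t]; i.e. (x,y) are isothermal coordinates for the affine metric of every member of the associated family. -/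

import Mathlib

/-- Real hyperbolic cotangent. -/
noncomputable def coth (x : ℝ) : ℝ := Real.cosh x / Real.sinh x

/-- The associated family (at loop parameter `λ = e^{3it}`) of Hildebrand's case-1
complete hyperbolic affine sphere, up to a constant invertible matrix factor. -/
noncomputable def vt (t x y : ℝ) : Fin 3 → ℝ :=
  ![ -(coth (Real.sqrt 3 * x) + (2 / Real.sqrt 3) * Real.cos t) *
       Real.exp (2 * (-x * Real.cos t + y * Real.sin t)),
     -(coth (Real.sqrt 3 * x) - (Real.cos t - Real.sqrt 3 * Real.sin t) / Real.sqrt 3) *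
       Real.exp ((Real.cos t - Real.sqrt 3 * Real.sin t) * x +
         (-Real.sin t - Real.sqrt 3 * Real.cos t) * y),
     -(coth (Real.sqrt 3 * x) - (Real.cos t + Real.sqrt 3 * Real.sin t) / Real.sqrt 3) *
       Real.exp ((Real.cos t + Real.sqrt 3 * Real.sin t) * x +
         (-Real.sin t + Real.sqrt 3 * Real.cos t) * y) ]

/-- `∂ₓ vt`. -/
noncomputable def vtx (t x y : ℝ) : Fin 3 → ℝ := fun i => deriv (fun s => vt t s y i) x
/-- `∂ᵧ vt`. -/
noncomputable def vty (t x y : ℝ) : Fin 3 → ℝ := fun i => deriv (fun s => vt t x s i) y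
/-- `∂ₓₓ vt`. -/
noncomputable def vtxx (t x y : ℝ) : Fin 3 → ℝ := fun i => deriv (fun s => vtx t s y i) x
/-- `∂ₓᵧ vt`. -/
noncomputable def vtxy (t x y : ℝ) : Fin 3 → ℝ := fun i => deriv (fun s => vtx t x s i) y
/-- `∂ᵧᵧ vt`. -/
noncomputable def vtyy (t x y : ℝ) : Fin 3 → ℝ := fun i => deriv (fun s => vty t x s i) y

lemma coth_hasDerivAt (x : ℝ) (hx : Real.sinh (Real.sqrt 3 * x) ≠ 0) :
    HasDerivAt (fun s => coth (Real.sqrt 3 * s))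
      (Real.sqrt 3 * (1 - coth (Real.sqrt 3 * x) ^ 2)) x := by
  have h1 : HasDerivAt (fun s : ℝ => Real.sqrt 3 * s) (Real.sqrt 3) x := by
    simpa using (hasDerivAt_id x).const_mul (Real.sqrt 3)
  have hd := (h1.cosh).div (h1.sinh) hx
  simp only [coth]
  refine hd.congr_deriv ?_
  field_simp

lemma keyx2 (p q r A B x : ℝ) (hx : Real.sinh (Real.sqrt 3 * x) ≠ 0) :
    HasDerivAt (fun s => (p + q * coth (Real.sqrt 3 * s) + r * coth (Real.sqrt 3 * s) ^ 2) *
        Real.exp (A * s + B))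
      (((q + 2 * r * coth (Real.sqrt 3 * x)) *
          (Real.sqrt 3 * (1 - coth (Real.sqrt 3 * x) ^ 2)) +
        (p + q * coth (Real.sqrt 3 * x) + r * coth (Real.sqrt 3 * x) ^ 2) * A) *
        Real.exp (A * x + B)) x := by
  have hco := coth_hasDerivAt x hx
  have hf := ((hasDerivAt_const x p).add (hco.const_mul q)).add ((hco.pow 2).const_mul r)
  have hexp : HasDerivAt (fun s => Real.exp (A * s + B)) (Real.exp (A * x + B) * A) x := by
    have := (((hasDerivAt_id x).const_mul A).add_const B).exp
    simpa using this
  have := hf.mul hexp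
  refine this.congr_deriv ?_
  push_cast [Pi.add_apply, Pi.pow_apply]
  ring

lemma keyy (K A B y : ℝ) :
    HasDerivAt (fun s => K * Real.exp (A + B * s)) (K * B * Real.exp (A + B * y)) y := by
  have hexp : HasDerivAt (fun s => Real.exp (A + B * s)) (Real.exp (A + B * y) * B) y := by
    have := (((hasDerivAt_id y).const_mul B).const_add A).exp
    simpa using this
  have := hexp.const_mul K
  refine this.congr_deriv ?_
  ring

noncomputable def Ac (t : ℝ) : Fin 3 → ℝ :=
  ![-2 * Real.cos t, Real.cos t - Real.sqrt 3 * Real.sin t, Real.cos t + Real.sqrt 3 * Real.sin t]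
noncomputable def Bc (t : ℝ) : Fin 3 → ℝ :=
  ![2 * Real.sin t, -Real.sin t - Real.sqrt 3 * Real.cos t, -Real.sin t + Real.sqrt 3 * Real.cos t]

/-- scalar factor of `vt`. -/
noncomputable def FF (t x : ℝ) (i : Fin 3) : ℝ :=
  -coth (Real.sqrt 3 * x) + Ac t i / Real.sqrt 3
/-- exponential factor. -/
noncomputable def EE (t x y : ℝ) (i : Fin 3) : ℝ := Real.exp (Ac t i * x + Bc t i * y)
/-- scalar factor of `vtx`. -/
noncomputable def PX (t x : ℝ) (i : Fin 3) : ℝ :=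
  Real.sqrt 3 * (coth (Real.sqrt 3 * x) ^ 2 - 1) + Ac t i * FF t x i
/-- scalar factor of `vtxx`. -/
noncomputable def SX (t x : ℝ) (i : Fin 3) : ℝ :=
  (-Ac t i + 2 * Real.sqrt 3 * coth (Real.sqrt 3 * x)) *
      (Real.sqrt 3 * (1 - coth (Real.sqrt 3 * x) ^ 2)) +
    (-Real.sqrt 3 + Ac t i ^ 2 / Real.sqrt 3 + -Ac t i * coth (Real.sqrt 3 * x) +
        Real.sqrt 3 * coth (Real.sqrt 3 * x) ^ 2) * Ac t i

lemma vt_eq (t x y : ℝ) (i : Fin 3) : vt t x y i = FF t x i * EE t x y i := by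
  fin_cases i
  · show vt t x y 0 = FF t x 0 * EE t x y 0
    simp only [vt, FF, EE, Ac, Bc, Matrix.cons_val_zero]
    rw [show 2 * (-x * Real.cos t + y * Real.sin t) =
        -2 * Real.cos t * x + 2 * Real.sin t * y by ring]
    ring
  · show vt t x y 1 = FF t x 1 * EE t x y 1
    simp only [vt, FF, EE, Ac, Bc, Matrix.cons_val_one, Matrix.head_cons, Matrix.cons_val_zero]
    ring
  · show vt t x y 2 = FF t x 2 * EE t x y 2
    simp only [vt, FF, EE, Ac, Bc, Matrix.cons_val_two, Matrix.tail_cons, Matrix.head_cons,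
      Matrix.cons_val_zero, Matrix.cons_val_one]
    ring

lemma vt_fun_eq (t y : ℝ) (i : Fin 3) :
    (fun s => vt t s y i) = fun s =>
      (Ac t i / Real.sqrt 3 + (-1) * coth (Real.sqrt 3 * s) + 0 * coth (Real.sqrt 3 * s) ^ 2) *
        Real.exp (Ac t i * s + Bc t i * y) := by
  funext s
  rw [vt_eq t s y i]
  simp only [FF, EE]
  ring

lemma vtx_eq (t x y : ℝ) (h : Real.sinh (Real.sqrt 3 * x) ≠ 0) (i : Fin 3) :
    vtx t x y i = PX t x i * EE t x y i := by
  have hk := keyx2 (Ac t i / Real.sqrt 3) (-1) 0 (Ac t i) (Bc t i * y) x h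
  simp only [vtx]
  rw [vt_fun_eq t y i, hk.deriv]
  simp only [PX, FF, EE]
  ring

lemma vty_eq (t x y : ℝ) (i : Fin 3) :
    vty t x y i = Bc t i * FF t x i * EE t x y i := by
  have hfun : (fun s => vt t x s i) = fun s => FF t x i * Real.exp (Ac t i * x + Bc t i * s) := by
    funext s; rw [vt_eq t x s i]; simp only [EE]
  have hk := keyy (FF t x i) (Ac t i * x) (Bc t i) y
  simp only [vty]
  rw [hfun, hk.deriv]
  simp only [EE]
  ring

lemma vtxy_eq (t x y : ℝ) (h : Real.sinh (Real.sqrt 3 * x) ≠ 0) (i : Fin 3) :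
    vtxy t x y i = Bc t i * PX t x i * EE t x y i := by
  have hfun : (fun s => vtx t x s i) = fun s => PX t x i * Real.exp (Ac t i * x + Bc t i * s) := by
    funext s; rw [vtx_eq t x s h i]; simp only [EE]
  have hk := keyy (PX t x i) (Ac t i * x) (Bc t i) y
  simp only [vtxy]
  rw [hfun, hk.deriv]
  simp only [EE]
  ring

lemma vtyy_eq (t x y : ℝ) (i : Fin 3) :
    vtyy t x y i = Bc t i ^ 2 * FF t x i * EE t x y i := by
  have hfun : (fun s => vty t x s i) =
      fun s => Bc t i * FF t x i * Real.exp (Ac t i * x + Bc t i * s) := by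
    funext s; rw [vty_eq t x s i]; simp only [EE]
  have hk := keyy (Bc t i * FF t x i) (Ac t i * x) (Bc t i) y
  simp only [vtyy]
  rw [hfun, hk.deriv]
  simp only [EE]
  ring

lemma vtxx_eq (t x y : ℝ) (hx : 0 < x) (i : Fin 3) :
    vtxx t x y i = SX t x i * EE t x y i := by
  have h : Real.sinh (Real.sqrt 3 * x) ≠ 0 :=
    ne_of_gt (Real.sinh_pos_iff.mpr (by positivity))
  have hev : (fun s => vtx t s y i) =ᶠ[nhds x] fun s =>
      ((-Real.sqrt 3 + Ac t i ^ 2 / Real.sqrt 3) + (-Ac t i) * coth (Real.sqrt 3 * s) +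
        Real.sqrt 3 * coth (Real.sqrt 3 * s) ^ 2) * Real.exp (Ac t i * s + Bc t i * y) := by
    filter_upwards [isOpen_Ioi.eventually_mem (Set.mem_Ioi.mpr hx)] with s hs
    have hs' : Real.sinh (Real.sqrt 3 * s) ≠ 0 :=
      ne_of_gt (Real.sinh_pos_iff.mpr (by have : (0:ℝ) < s := hs; positivity))
    rw [vtx_eq t s y hs' i]
    simp only [PX, FF, EE]
    ring
  have hk := keyx2 (-Real.sqrt 3 + Ac t i ^ 2 / Real.sqrt 3) (-Ac t i) (Real.sqrt 3)
    (Ac t i) (Bc t i * y) x h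
  simp only [vtxx]
  rw [hev.deriv_eq, hk.deriv]
  simp only [SX, EE]

/-- `(x,y)` are isothermal coordinates for the affine metric of every member of the
associated family: `M = 0` and `L = N`. -/
theorem associated_family_isothermal_case1 :
    ∀ t : ℝ, ∀ x : ℝ, 0 < x → ∀ y : ℝ,
      Matrix.det (Matrix.of ![vtx t x y, vty t x y, vtxy t x y]) = 0 ∧
      Matrix.det (Matrix.of ![vtx t x y, vty t x y, vtxx t x y]) =
        Matrix.det (Matrix.of ![vtx t x y, vty t x y, vtyy t x y]) := by
  intro t x hx y
  have h : Real.sinh (Real.sqrt 3 * x) ≠ 0 :=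
    ne_of_gt (Real.sinh_pos_iff.mpr (by positivity))
  have hss : Real.sqrt 3 ^ 2 = 3 := Real.sq_sqrt (by norm_num)
  have hw : Real.sqrt 3 * (Real.sqrt 3)⁻¹ = 1 := mul_inv_cancel₀ (by positivity)
  have hc : Real.cos t ^ 2 + Real.sin t ^ 2 = 1 := Real.cos_sq_add_sin_sq t
  constructor
  · rw [Matrix.det_fin_three]
    simp only [Matrix.of_apply, Matrix.cons_val', Matrix.cons_val_zero, Matrix.cons_val_one,
      Matrix.head_cons, Matrix.empty_val', Matrix.cons_val_fin_one, Matrix.head_fin_const,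
      Matrix.cons_val_two, Matrix.tail_cons]
    rw [vtx_eq t x y h 0, vtx_eq t x y h 1, vtx_eq t x y h 2,
      vty_eq t x y 0, vty_eq t x y 1, vty_eq t x y 2,
      vtxy_eq t x y h 0, vtxy_eq t x y h 1, vtxy_eq t x y h 2]
    simp only [PX, SX, FF, EE, Ac, Bc, Matrix.cons_val_zero, Matrix.cons_val_one,
      Matrix.head_cons, Matrix.cons_val_two, Matrix.tail_cons]
    linear_combination
      (((Real.exp (-2 * Real.cos t * x + 2 * Real.sin t * y)) * (Real.exp ((Real.cos t - Real.sqrt 3 * Real.sin t) * x + (-Real.sin t - Real.sqrt 3 * Real.cos t) * y)) * (Real.exp ((Real.cos t + Real.sqrt 3 * Real.sin t) * x + (-Real.sin t + Real.sqrt 3 * Real.cos t) * y))) * ((-6)*(Real.sin t)^3*(Real.sqrt 3)^2 + (6)*(Real.sin t)^5*(Real.sqrt 3)^2 + (6)*(Real.sin t)^5*(Real.sqrt 3)^3*(Real.sqrt 3)⁻¹ + (12)*(Real.cos t)^2*(Real.sin t)*(Real.sqrt 3)^2 + (2)*(Real.cos t)^2*(Real.sin t)*(Real.sqrt 3)^4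 + (18)*(Real.cos t)^2*(Real.sin t)^3 + (18)*(Real.cos t)^2*(Real.sin t)^3*(Real.sqrt 3)*(Real.sqrt 3)⁻¹ + (-12)*(Real.cos t)^2*(Real.sin t)^3*(Real.sqrt 3)^2 + (-12)*(Real.cos t)^2*(Real.sin t)^3*(Real.sqrt 3)^3*(Real.sqrt 3)⁻¹ + (-2)*(Real.cos t)^2*(Real.sin t)^3*(Real.sqrt 3)^4 + (-2)*(Real.cos t)^2*(Real.sin t)^3*(Real.sqrt 3)^5*(Real.sqrt 3)⁻¹ + (-24)*(Real.cos t)^2*(Real.sin t)^5 + (-24)*(Real.cos t)^2*(Real.sin t)^5*(Real.sqrt 3)*(Real.sqrt 3)⁻¹ + (8)*(Real.cos t)^2*(Real.sin t)^5*(Real.sqrt 3)^2 + (-24)*(Real.cos t)^2*(Real.sin t)^5*(Real.sqrt 3)^2*(Real.sqrt 3)⁻¹^2 + (8)*(Real.cos t)^2*(Real.sin t)^5*(Real.sqrt 3)^3*(Real.sqrt 3)⁻¹ + (8)*(Real.cos t)^2*(Real.sin t)^5*(Real.sqrt 3)^4*(Real.sqrt 3)⁻¹^2 + (-36)*(Real.cos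 t)^4*(Real.sin t) + (-36)*(Real.cos t)^4*(Real.sin t)*(Real.sqrt 3)*(Real.sqrt 3)⁻¹ + (-6)*(Real.cos t)^4*(Real.sin t)*(Real.sqrt 3)^2 + (-6)*(Real.cos t)^4*(Real.sin t)*(Real.sqrt 3)^3*(Real.sqrt 3)⁻¹ + (-24)*(Real.cos t)^4*(Real.sin t)^3 + (24)*(Real.cos t)^4*(Real.sin t)^3*(Real.sqrt 3)⁻¹^2 + (-24)*(Real.cos t)^4*(Real.sin t)^3*(Real.sqrt 3)*(Real.sqrt 3)⁻¹ + (8)*(Real.cos t)^4*(Real.sin t)^3*(Real.sqrt 3)^2 + (-32)*(Real.cos t)^4*(Real.sin t)^3*(Real.sqrt 3)^2*(Real.sqrt 3)⁻¹^2 + (8)*(Real.cos t)^4*(Real.sin t)^3*(Real.sqrt 3)^3*(Real.sqrt 3)⁻¹ + (8)*(Real.cos t)^4*(Real.sin t)^3*(Real.sqrt 3)^4*(Real.sqrt 3)⁻¹^2 + (24)*(Real.cos t)^6*(Real.sin t)*(Real.sqrt 3)⁻¹^2 + (-8)*(Real.cos t)^6*(Real.sin t)*(Real.sqrt 3)^2*(Real.sqrt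 3)⁻¹^2 + (24)*(coth (Real.sqrt 3 * x))*(Real.cos t)*(Real.sin t)^3*(Real.sqrt 3) + (-8)*(coth (Real.sqrt 3 * x))*(Real.cos t)*(Real.sin t)^3*(Real.sqrt 3)^3 + (-12)*(coth (Real.sqrt 3 * x))*(Real.cos t)*(Real.sin t)^5*(Real.sqrt 3) + (-12)*(coth (Real.sqrt 3 * x))*(Real.cos t)*(Real.sin t)^5*(Real.sqrt 3)^2*(Real.sqrt 3)⁻¹ + (4)*(coth (Real.sqrt 3 * x))*(Real.cos t)*(Real.sin t)^5*(Real.sqrt 3)^3 + (4)*(coth (Real.sqrt 3 * x))*(Real.cos t)*(Real.sin t)^5*(Real.sqrt 3)^4*(Real.sqrt 3)⁻¹ + (24)*(coth (Real.sqrt 3 * x))*(Real.cos t)^3*(Real.sin t)*(Real.sqrt 3) + (-8)*(coth (Real.sqrt 3 * x))*(Real.cos t)^3*(Real.sin t)*(Real.sqrt 3)^3 + (-36)*(coth (Real.sqrt 3 * x))*(Real.cos t)^3*(Real.sin t)^3*(Real.sqrt 3)⁻¹ + (-12)*(coth (Real.sqrt 3 * x))*(Real.cos t)^3*(Real.sin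 t)^3*(Real.sqrt 3) + (4)*(coth (Real.sqrt 3 * x))*(Real.cos t)^3*(Real.sin t)^3*(Real.sqrt 3)^3 + (4)*(coth (Real.sqrt 3 * x))*(Real.cos t)^3*(Real.sin t)^3*(Real.sqrt 3)^4*(Real.sqrt 3)⁻¹ + (-36)*(coth (Real.sqrt 3 * x))*(Real.cos t)^5*(Real.sin t)*(Real.sqrt 3)⁻¹ + (12)*(coth (Real.sqrt 3 * x))*(Real.cos t)^5*(Real.sin t)*(Real.sqrt 3)^2*(Real.sqrt 3)⁻¹ + (12)*(coth (Real.sqrt 3 * x))^2*(Real.sin t)^3*(Real.sqrt 3)^2 + (-6)*(coth (Real.sqrt 3 * x))^2*(Real.sin t)^5*(Real.sqrt 3)^2 + (-6)*(coth (Real.sqrt 3 * x))^2*(Real.sin t)^5*(Real.sqrt 3)^3*(Real.sqrt 3)⁻¹ + (-24)*(coth (Real.sqrt 3 * x))^2*(Real.cos t)^2*(Real.sin t)*(Real.sqrt 3)^2 + (-4)*(coth (Real.sqrt 3 * x))^2*(Real.cos t)^2*(Real.sin t)*(Real.sqrt 3)^4 + (-18)*(coth (Real.sqrt 3 * x))^2*(Real.cos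 t)^2*(Real.sin t)^3 + (-18)*(coth (Real.sqrt 3 * x))^2*(Real.cos t)^2*(Real.sin t)^3*(Real.sqrt 3)*(Real.sqrt 3)⁻¹ + (12)*(coth (Real.sqrt 3 * x))^2*(Real.cos t)^2*(Real.sin t)^3*(Real.sqrt 3)^2 + (12)*(coth (Real.sqrt 3 * x))^2*(Real.cos t)^2*(Real.sin t)^3*(Real.sqrt 3)^3*(Real.sqrt 3)⁻¹ + (2)*(coth (Real.sqrt 3 * x))^2*(Real.cos t)^2*(Real.sin t)^3*(Real.sqrt 3)^4 + (2)*(coth (Real.sqrt 3 * x))^2*(Real.cos t)^2*(Real.sin t)^3*(Real.sqrt 3)^5*(Real.sqrt 3)⁻¹ + (36)*(coth (Real.sqrt 3 * x))^2*(Real.cos t)^4*(Real.sin t) + (36)*(coth (Real.sqrt 3 * x))^2*(Real.cos t)^4*(Real.sin t)*(Real.sqrt 3)*(Real.sqrt 3)⁻¹ + (6)*(coth (Real.sqrt 3 * x))^2*(Real.cos t)^4*(Real.sin t)*(Real.sqrt 3)^2 + (6)*(coth (Real.sqrt 3 * x))^2*(Real.cos t)^4*(Real.sin t)*(Real.sqrt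 3)^3*(Real.sqrt 3)⁻¹ + (-24)*(coth (Real.sqrt 3 * x))^3*(Real.cos t)*(Real.sin t)^3*(Real.sqrt 3) + (8)*(coth (Real.sqrt 3 * x))^3*(Real.cos t)*(Real.sin t)^3*(Real.sqrt 3)^3 + (-24)*(coth (Real.sqrt 3 * x))^3*(Real.cos t)^3*(Real.sin t)*(Real.sqrt 3) + (8)*(coth (Real.sqrt 3 * x))^3*(Real.cos t)^3*(Real.sin t)*(Real.sqrt 3)^3 + (-6)*(coth (Real.sqrt 3 * x))^4*(Real.sin t)^3*(Real.sqrt 3)^2 + (12)*(coth (Real.sqrt 3 * x))^4*(Real.cos t)^2*(Real.sin t)*(Real.sqrt 3)^2 + (2)*(coth (Real.sqrt 3 * x))^4*(Real.cos t)^2*(Real.sin t)*(Real.sqrt 3)^4)) * hw +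
      (((Real.exp (-2 * Real.cos t * x + 2 * Real.sin t * y)) * (Real.exp ((Real.cos t - Real.sqrt 3 * Real.sin t) * x + (-Real.sin t - Real.sqrt 3 * Real.cos t) * y)) * (Real.exp ((Real.cos t + Real.sqrt 3 * Real.sin t) * x + (-Real.sin t + Real.sqrt 3 * Real.cos t) * y))) * ((-6)*(Real.sin t)^3 + (6)*(Real.sin t)^5 + (18)*(Real.cos t)^2*(Real.sin t) + (2)*(Real.cos t)^2*(Real.sin t)*(Real.sqrt 3)^2 + (-18)*(Real.cos t)^2*(Real.sin t)^3 + (-2)*(Real.cos t)^2*(Real.sin t)^3*(Real.sqrt 3)^2 + (8)*(Real.cos t)^2*(Real.sin t)^5 + (-6)*(Real.cos t)^4*(Real.sin t) + (8)*(Real.cos t)^4*(Real.sin t)^3 + (-8)*(Real.cos t)^4*(Real.sin t)^3*(Real.sqrt 3)⁻¹^2 + (-8)*(Real.cos t)^6*(Real.sin t)*(Real.sqrt 3)⁻¹^2 + (-8)*(coth (Real.sqrt 3 * x))*(Real.cos t)*(Real.sin t)^3*(Real.sqrt 3) + (4)*(coth (Real.sqrt 3 * x))*(Real.cos t)*(Real.sin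 t)^5*(Real.sqrt 3) + (-8)*(coth (Real.sqrt 3 * x))*(Real.cos t)^3*(Real.sin t)*(Real.sqrt 3) + (12)*(coth (Real.sqrt 3 * x))*(Real.cos t)^3*(Real.sin t)^3*(Real.sqrt 3)⁻¹ + (4)*(coth (Real.sqrt 3 * x))*(Real.cos t)^3*(Real.sin t)^3*(Real.sqrt 3) + (12)*(coth (Real.sqrt 3 * x))*(Real.cos t)^5*(Real.sin t)*(Real.sqrt 3)⁻¹ + (6)*(coth (Real.sqrt 3 * x))^2*(Real.sin t)^3 + (-6)*(coth (Real.sqrt 3 * x))^2*(Real.sin t)^5 + (-18)*(coth (Real.sqrt 3 * x))^2*(Real.cos t)^2*(Real.sin t) + (-2)*(coth (Real.sqrt 3 * x))^2*(Real.cos t)^2*(Real.sin t)*(Real.sqrt 3)^2 + (18)*(coth (Real.sqrt 3 * x))^2*(Real.cos t)^2*(Real.sin t)^3 + (2)*(coth (Real.sqrt 3 * x))^2*(Real.cos t)^2*(Real.sin t)^3*(Real.sqrt 3)^2 + (6)*(coth (Real.sqrt 3 * x))^2*(Real.cos t)^4*(Real.sin t) + (4)*(coth (Real.sqrt 3 *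 x))^3*(Real.cos t)*(Real.sin t)^3*(Real.sqrt 3) + (4)*(coth (Real.sqrt 3 * x))^3*(Real.cos t)^3*(Real.sin t)*(Real.sqrt 3))) * hss +
      (((Real.exp (-2 * Real.cos t * x + 2 * Real.sin t * y)) * (Real.exp ((Real.cos t - Real.sqrt 3 * Real.sin t) * x + (-Real.sin t - Real.sqrt 3 * Real.cos t) * y)) * (Real.exp ((Real.cos t + Real.sqrt 3 * Real.sin t) * x + (-Real.sin t + Real.sqrt 3 * Real.cos t) * y))) * ((18)*(Real.sin t)^3 + (-54)*(Real.cos t)^2*(Real.sin t) + (-18)*(coth (Real.sqrt 3 * x))^2*(Real.sin t)^3 + (54)*(coth (Real.sqrt 3 * x))^2*(Real.cos t)^2*(Real.sin t))) * hc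
  · rw [Matrix.det_fin_three, Matrix.det_fin_three]
    simp only [Matrix.of_apply, Matrix.cons_val', Matrix.cons_val_zero, Matrix.cons_val_one,
      Matrix.head_cons, Matrix.empty_val', Matrix.cons_val_fin_one, Matrix.head_fin_const,
      Matrix.cons_val_two, Matrix.tail_cons]
    rw [vtx_eq t x y h 0, vtx_eq t x y h 1, vtx_eq t x y h 2,
      vty_eq t x y 0, vty_eq t x y 1, vty_eq t x y 2,
      vtxx_eq t x y hx 0, vtxx_eq t x y hx 1, vtxx_eq t x y hx 2,
      vtyy_eq t x y 0, vtyy_eq t x y 1, vtyy_eq t x y 2]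
    simp only [PX, SX, FF, EE, Ac, Bc, Matrix.cons_val_zero, Matrix.cons_val_one,
      Matrix.head_cons, Matrix.cons_val_two, Matrix.tail_cons]
    linear_combination
      (((Real.exp (-2 * Real.cos t * x + 2 * Real.sin t * y)) * (Real.exp ((Real.cos t - Real.sqrt 3 * Real.sin t) * x + (-Real.sin t - Real.sqrt 3 * Real.cos t) * y)) * (Real.exp ((Real.cos t + Real.sqrt 3 * Real.sin t) * x + (-Real.sin t + Real.sqrt 3 * Real.cos t) * y))) * ((24)*(Real.cos t)*(Real.sin t)^2*(Real.sqrt 3)^2 + (4)*(Real.cos t)*(Real.sin t)^2*(Real.sqrt 3)^4 + (24)*(Real.cos t)*(Real.sin t)^4 + (24)*(Real.cos t)*(Real.sin t)^4*(Real.sqrt 3)*(Real.sqrt 3)⁻¹ + (-38)*(Real.cos t)*(Real.sin t)^4*(Real.sqrt 3)^2 + (-38)*(Real.cos t)*(Real.sin t)^4*(Real.sqrt 3)^3*(Real.sqrt 3)⁻¹ + (-2)*(Real.cos t)*(Real.sin t)^4*(Real.sqrt 3)^4 + (-2)*(Real.cos t)*(Real.sin t)^4*(Real.sqrt 3)^5*(Real.sqrt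 3)⁻¹ + (-24)*(Real.cos t)*(Real.sin t)^6 + (-24)*(Real.cos t)*(Real.sin t)^6*(Real.sqrt 3)*(Real.sqrt 3)⁻¹ + (8)*(Real.cos t)*(Real.sin t)^6*(Real.sqrt 3)^2 + (-24)*(Real.cos t)*(Real.sin t)^6*(Real.sqrt 3)^2*(Real.sqrt 3)⁻¹^2 + (8)*(Real.cos t)*(Real.sin t)^6*(Real.sqrt 3)^3*(Real.sqrt 3)⁻¹ + (8)*(Real.cos t)*(Real.sin t)^6*(Real.sqrt 3)^4*(Real.sqrt 3)⁻¹^2 + (-12)*(Real.cos t)^3*(Real.sqrt 3)^2 + (-42)*(Real.cos t)^3*(Real.sin t)^2 + (-42)*(Real.cos t)^3*(Real.sin t)^2*(Real.sqrt 3)*(Real.sqrt 3)⁻¹ + (-16)*(Real.cos t)^3*(Real.sin t)^2*(Real.sqrt 3)^2 + (-16)*(Real.cos t)^3*(Real.sin t)^2*(Real.sqrt 3)^3*(Real.sqrt 3)⁻¹ + (2)*(Real.cos t)^3*(Real.sin t)^2*(Real.sqrt 3)^4 + (2)*(Real.cos t)^3*(Real.sin t)^2*(Real.sqrt 3)^5*(Real.sqrt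 3)⁻¹ + (24)*(Real.cos t)^3*(Real.sin t)^4*(Real.sqrt 3)⁻¹^2 + (-8)*(Real.cos t)^3*(Real.sin t)^4*(Real.sqrt 3)^2*(Real.sqrt 3)⁻¹^2 + (42)*(Real.cos t)^5 + (42)*(Real.cos t)^5*(Real.sqrt 3)*(Real.sqrt 3)⁻¹ + (-2)*(Real.cos t)^5*(Real.sqrt 3)^2 + (-2)*(Real.cos t)^5*(Real.sqrt 3)^3*(Real.sqrt 3)⁻¹ + (24)*(Real.cos t)^5*(Real.sin t)^2 + (24)*(Real.cos t)^5*(Real.sin t)^2*(Real.sqrt 3)*(Real.sqrt 3)⁻¹ + (-8)*(Real.cos t)^5*(Real.sin t)^2*(Real.sqrt 3)^2 + (24)*(Real.cos t)^5*(Real.sin t)^2*(Real.sqrt 3)^2*(Real.sqrt 3)⁻¹^2 + (-8)*(Real.cos t)^5*(Real.sin t)^2*(Real.sqrt 3)^3*(Real.sqrt 3)⁻¹ + (-8)*(Real.cos t)^5*(Real.sin t)^2*(Real.sqrt 3)^4*(Real.sqrt 3)⁻¹^2 + (-24)*(Real.cos t)^7*(Real.sqrt 3)⁻¹^2 + (8)*(Real.cos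 t)^7*(Real.sqrt 3)^2*(Real.sqrt 3)⁻¹^2 + (12)*(coth (Real.sqrt 3 * x))*(Real.sin t)^4*(Real.sqrt 3) + (-16)*(coth (Real.sqrt 3 * x))*(Real.sin t)^4*(Real.sqrt 3)^3 + (-4)*(coth (Real.sqrt 3 * x))*(Real.sin t)^4*(Real.sqrt 3)^4*(Real.sqrt 3)⁻¹ + (-12)*(coth (Real.sqrt 3 * x))*(Real.sin t)^6*(Real.sqrt 3) + (-12)*(coth (Real.sqrt 3 * x))*(Real.sin t)^6*(Real.sqrt 3)^2*(Real.sqrt 3)⁻¹ + (4)*(coth (Real.sqrt 3 * x))*(Real.sin t)^6*(Real.sqrt 3)^3 + (4)*(coth (Real.sqrt 3 * x))*(Real.sin t)^6*(Real.sqrt 3)^4*(Real.sqrt 3)⁻¹ + (-36)*(coth (Real.sqrt 3 * x))*(Real.cos t)^2*(Real.sin t)^2*(Real.sqrt 3) + (-12)*(coth (Real.sqrt 3 * x))*(Real.cos t)^2*(Real.sin t)^2*(Real.sqrt 3)^2*(Real.sqrt 3)⁻¹ + (-12)*(coth (Real.sqrt 3 * x))*(Real.cos t)^2*(Real.sin t)^2*(Real.sqrt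 3)^3 + (-4)*(coth (Real.sqrt 3 * x))*(Real.cos t)^2*(Real.sin t)^2*(Real.sqrt 3)^4*(Real.sqrt 3)⁻¹ + (-36)*(coth (Real.sqrt 3 * x))*(Real.cos t)^2*(Real.sin t)^4*(Real.sqrt 3)⁻¹ + (12)*(coth (Real.sqrt 3 * x))*(Real.cos t)^2*(Real.sin t)^4*(Real.sqrt 3)^2*(Real.sqrt 3)⁻¹ + (-48)*(coth (Real.sqrt 3 * x))*(Real.cos t)^4*(Real.sqrt 3) + (-12)*(coth (Real.sqrt 3 * x))*(Real.cos t)^4*(Real.sqrt 3)^2*(Real.sqrt 3)⁻¹ + (4)*(coth (Real.sqrt 3 * x))*(Real.cos t)^4*(Real.sqrt 3)^3 + (12)*(coth (Real.sqrt 3 * x))*(Real.cos t)^4*(Real.sin t)^2*(Real.sqrt 3) + (12)*(coth (Real.sqrt 3 * x))*(Real.cos t)^4*(Real.sin t)^2*(Real.sqrt 3)^2*(Real.sqrt 3)⁻¹ + (-4)*(coth (Real.sqrt 3 * x))*(Real.cos t)^4*(Real.sin t)^2*(Real.sqrt 3)^3 + (-4)*(coth (Real.sqrt 3 * x))*(Real.cos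 t)^4*(Real.sin t)^2*(Real.sqrt 3)^4*(Real.sqrt 3)⁻¹ + (36)*(coth (Real.sqrt 3 * x))*(Real.cos t)^6*(Real.sqrt 3)⁻¹ + (-12)*(coth (Real.sqrt 3 * x))*(Real.cos t)^6*(Real.sqrt 3)^2*(Real.sqrt 3)⁻¹ + (-48)*(coth (Real.sqrt 3 * x))^2*(Real.cos t)*(Real.sin t)^2*(Real.sqrt 3)^2 + (-8)*(coth (Real.sqrt 3 * x))^2*(Real.cos t)*(Real.sin t)^2*(Real.sqrt 3)^4 + (-24)*(coth (Real.sqrt 3 * x))^2*(Real.cos t)*(Real.sin t)^4 + (-24)*(coth (Real.sqrt 3 * x))^2*(Real.cos t)*(Real.sin t)^4*(Real.sqrt 3)*(Real.sqrt 3)⁻¹ + (38)*(coth (Real.sqrt 3 * x))^2*(Real.cos t)*(Real.sin t)^4*(Real.sqrt 3)^2 + (38)*(coth (Real.sqrt 3 * x))^2*(Real.cos t)*(Real.sin t)^4*(Real.sqrt 3)^3*(Real.sqrt 3)⁻¹ + (2)*(coth (Real.sqrt 3 * x))^2*(Real.cos t)*(Real.sin t)^4*(Real.sqrt 3)^4 +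 (2)*(coth (Real.sqrt 3 * x))^2*(Real.cos t)*(Real.sin t)^4*(Real.sqrt 3)^5*(Real.sqrt 3)⁻¹ + (24)*(coth (Real.sqrt 3 * x))^2*(Real.cos t)^3*(Real.sqrt 3)^2 + (42)*(coth (Real.sqrt 3 * x))^2*(Real.cos t)^3*(Real.sin t)^2 + (42)*(coth (Real.sqrt 3 * x))^2*(Real.cos t)^3*(Real.sin t)^2*(Real.sqrt 3)*(Real.sqrt 3)⁻¹ + (16)*(coth (Real.sqrt 3 * x))^2*(Real.cos t)^3*(Real.sin t)^2*(Real.sqrt 3)^2 + (16)*(coth (Real.sqrt 3 * x))^2*(Real.cos t)^3*(Real.sin t)^2*(Real.sqrt 3)^3*(Real.sqrt 3)⁻¹ + (-2)*(coth (Real.sqrt 3 * x))^2*(Real.cos t)^3*(Real.sin t)^2*(Real.sqrt 3)^4 + (-2)*(coth (Real.sqrt 3 * x))^2*(Real.cos t)^3*(Real.sin t)^2*(Real.sqrt 3)^5*(Real.sqrt 3)⁻¹ + (-42)*(coth (Real.sqrt 3 * x))^2*(Real.cos t)^5 + (-42)*(coth (Real.sqrt 3 * x))^2*(Real.cos t)^5*(Real.sqrt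 3)*(Real.sqrt 3)⁻¹ + (2)*(coth (Real.sqrt 3 * x))^2*(Real.cos t)^5*(Real.sqrt 3)^2 + (2)*(coth (Real.sqrt 3 * x))^2*(Real.cos t)^5*(Real.sqrt 3)^3*(Real.sqrt 3)⁻¹ + (-12)*(coth (Real.sqrt 3 * x))^3*(Real.sin t)^4*(Real.sqrt 3) + (16)*(coth (Real.sqrt 3 * x))^3*(Real.sin t)^4*(Real.sqrt 3)^3 + (4)*(coth (Real.sqrt 3 * x))^3*(Real.sin t)^4*(Real.sqrt 3)^4*(Real.sqrt 3)⁻¹ + (36)*(coth (Real.sqrt 3 * x))^3*(Real.cos t)^2*(Real.sin t)^2*(Real.sqrt 3) + (12)*(coth (Real.sqrt 3 * x))^3*(Real.cos t)^2*(Real.sin t)^2*(Real.sqrt 3)^2*(Real.sqrt 3)⁻¹ + (12)*(coth (Real.sqrt 3 * x))^3*(Real.cos t)^2*(Real.sin t)^2*(Real.sqrt 3)^3 + (4)*(coth (Real.sqrt 3 * x))^3*(Real.cos t)^2*(Real.sin t)^2*(Real.sqrt 3)^4*(Real.sqrt 3)⁻¹ + (48)*(coth (Real.sqrt 3 * x))^3*(Real.cos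 t)^4*(Real.sqrt 3) + (12)*(coth (Real.sqrt 3 * x))^3*(Real.cos t)^4*(Real.sqrt 3)^2*(Real.sqrt 3)⁻¹ + (-4)*(coth (Real.sqrt 3 * x))^3*(Real.cos t)^4*(Real.sqrt 3)^3 + (24)*(coth (Real.sqrt 3 * x))^4*(Real.cos t)*(Real.sin t)^2*(Real.sqrt 3)^2 + (4)*(coth (Real.sqrt 3 * x))^4*(Real.cos t)*(Real.sin t)^2*(Real.sqrt 3)^4 + (-12)*(coth (Real.sqrt 3 * x))^4*(Real.cos t)^3*(Real.sqrt 3)^2)) * hw +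
      (((Real.exp (-2 * Real.cos t * x + 2 * Real.sin t * y)) * (Real.exp ((Real.cos t - Real.sqrt 3 * Real.sin t) * x + (-Real.sin t - Real.sqrt 3 * Real.cos t) * y)) * (Real.exp ((Real.cos t + Real.sqrt 3 * Real.sin t) * x + (-Real.sin t + Real.sqrt 3 * Real.cos t) * y))) * ((36)*(Real.cos t)*(Real.sin t)^2 + (4)*(Real.cos t)*(Real.sin t)^2*(Real.sqrt 3)^2 + (-44)*(Real.cos t)*(Real.sin t)^4 + (-2)*(Real.cos t)*(Real.sin t)^4*(Real.sqrt 3)^2 + (8)*(Real.cos t)*(Real.sin t)^6 + (-12)*(Real.cos t)^3 + (-10)*(Real.cos t)^3*(Real.sin t)^2 + (2)*(Real.cos t)^3*(Real.sin t)^2*(Real.sqrt 3)^2 + (-8)*(Real.cos t)^3*(Real.sin t)^4*(Real.sqrt 3)⁻¹^2 + (-2)*(Real.cos t)^5 + (-8)*(Real.cos t)^5*(Real.sin t)^2 + (8)*(Real.cos t)^7*(Real.sqrt 3)⁻¹^2 + (12)*(coth (Real.sqrt 3 * x))*(Real.sin t)^2*(Real.sqrt 3) + (-16)*(coth (Real.sqrt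 3 * x))*(Real.sin t)^4*(Real.sqrt 3) + (4)*(coth (Real.sqrt 3 * x))*(Real.sin t)^6*(Real.sqrt 3) + (12)*(coth (Real.sqrt 3 * x))*(Real.cos t)^2*(Real.sqrt 3) + (-12)*(coth (Real.sqrt 3 * x))*(Real.cos t)^2*(Real.sin t)^2*(Real.sqrt 3) + (12)*(coth (Real.sqrt 3 * x))*(Real.cos t)^2*(Real.sin t)^4*(Real.sqrt 3)⁻¹ + (4)*(coth (Real.sqrt 3 * x))*(Real.cos t)^4*(Real.sqrt 3) + (-4)*(coth (Real.sqrt 3 * x))*(Real.cos t)^4*(Real.sin t)^2*(Real.sqrt 3) + (-12)*(coth (Real.sqrt 3 * x))*(Real.cos t)^6*(Real.sqrt 3)⁻¹ + (-36)*(coth (Real.sqrt 3 * x))^2*(Real.cos t)*(Real.sin t)^2 + (-6)*(coth (Real.sqrt 3 * x))^2*(Real.cos t)*(Real.sin t)^2*(Real.sqrt 3)^2 + (44)*(coth (Real.sqrt 3 * x))^2*(Real.cos t)*(Real.sin t)^4 + (2)*(coth (Real.sqrt 3 * x))^2*(Real.cos t)*(Real.sin t)^4*(Real.sqrt 3)^2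 + (12)*(coth (Real.sqrt 3 * x))^2*(Real.cos t)^3 + (-2)*(coth (Real.sqrt 3 * x))^2*(Real.cos t)^3*(Real.sqrt 3)^2 + (10)*(coth (Real.sqrt 3 * x))^2*(Real.cos t)^3*(Real.sin t)^2 + (-2)*(coth (Real.sqrt 3 * x))^2*(Real.cos t)^3*(Real.sin t)^2*(Real.sqrt 3)^2 + (2)*(coth (Real.sqrt 3 * x))^2*(Real.cos t)^5 + (-12)*(coth (Real.sqrt 3 * x))^3*(Real.sin t)^2*(Real.sqrt 3) + (12)*(coth (Real.sqrt 3 * x))^3*(Real.sin t)^4*(Real.sqrt 3) + (-12)*(coth (Real.sqrt 3 * x))^3*(Real.cos t)^2*(Real.sqrt 3) + (12)*(coth (Real.sqrt 3 * x))^3*(Real.cos t)^2*(Real.sin t)^2*(Real.sqrt 3) + (2)*(coth (Real.sqrt 3 * x))^4*(Real.cos t)*(Real.sin t)^2*(Real.sqrt 3)^2 + (2)*(coth (Real.sqrt 3 * x))^4*(Real.cos t)^3*(Real.sqrt 3)^2)) * hss +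
      (((Real.exp (-2 * Real.cos t * x + 2 * Real.sin t * y)) * (Real.exp ((Real.cos t - Real.sqrt 3 * Real.sin t) * x + (-Real.sin t - Real.sqrt 3 * Real.cos t) * y)) * (Real.exp ((Real.cos t + Real.sqrt 3 * Real.sin t) * x + (-Real.sin t + Real.sqrt 3 * Real.cos t) * y))) * ((-108)*(Real.cos t)*(Real.sin t)^2 + (36)*(Real.cos t)^3 + (-36)*(coth (Real.sqrt 3 * x))*(Real.sin t)^2*(Real.sqrt 3) + (-36)*(coth (Real.sqrt 3 * x))*(Real.cos t)^2*(Real.sqrt 3) + (108)*(coth (Real.sqrt 3 * x))^2*(Real.cos t)*(Real.sin t)^2 + (-36)*(coth (Real.sqrt 3 * x))^2*(Real.cos t)^3 + (36)*(coth (Real.sqrt 3 * x))^3*(Real.sin t)^2*(Real.sqrt 3) + (36)*(coth (Real.sqrt 3 * x))^3*(Real.cos t)^2*(Real.sqrt 3))) * hc
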